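/- Fix s > 0, ξ ∈ ℝ, γ > 1/2 and μ = 0. Define N(ε) = (1/2) Σ_{v ∈ {−1,1}} (1/(−λ_ε(v) ν_ε(v))) · (1 + 2ε^γ/(ν_ε(v) − λ_ε(v) − 2ε^γ)) and D(ε) = 1 − (1/2) Σ_{v ∈ {−1,1}} 1/(−λ_ε(v)(ν_ε(v) − λ_ε(v) − 2ε^γ)). Then for all sufficiently small ε > 0 one has D(ε) ≠ 0, and ε · N(ε)/D(ε) → 1/√(s² + ξ²) as ε → 0⁺. -/

import Mathlib

open Filter Complex

lemma sqrt_tendsto_aux {α : Type*} {l : Filter α} {f : α → ℂ} {b : ℂ} (hb : 0 < b.re)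
    (hre : ∀ᶠ ε in l, 0 ≤ (f ε).re)
    (hsq : Tendsto (fun ε => f ε ^ 2) l (nhds (b ^ 2))) :
    Tendsto f l (nhds b) := by
  rw [tendsto_iff_norm_sub_tendsto_zero]
  have h0 : Tendsto (fun ε => ‖f ε ^ 2 - b ^ 2‖ / b.re) l (nhds 0) := by
    have h := (hsq.sub_const (b ^ 2)).norm
    simpa using h.div_const b.re
  refine squeeze_zero' (Eventually.of_forall fun ε => norm_nonneg _) ?_ h0
  filter_upwards [hre] with ε hε
  have hfac : f ε ^ 2 - b ^ 2 = (f ε - b) * (f ε + b) := by ring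
  have h1 : b.re ≤ ‖f ε + b‖ := by
    calc b.re ≤ (f ε + b).re := by simp only [Complex.add_re]; linarith
    _ ≤ ‖f ε + b‖ := Complex.re_le_norm _
    _ = ‖f ε + b‖ := rfl
  rw [hfac, norm_mul, le_div_iff₀ hb]
  exact mul_le_mul_of_nonneg_left h1 (norm_nonneg _)

lemma rpow_tendsto_zero {β : ℝ} (hβ : 0 < β) :
    Tendsto (fun ε : ℝ => ((ε ^ β : ℝ) : ℂ)) (nhdsWithin 0 (Set.Ioi 0)) (nhds 0) := by
  have h : Tendsto (fun ε : ℝ => ε ^ β) (nhdsWithin 0 (Set.Ioi 0)) (nhds 0) := by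
    have hc : ContinuousAt (fun ε : ℝ => ε ^ β) 0 :=
      Real.continuousAt_rpow_const 0 β (Or.inr hβ.le)
    have h2 := hc.tendsto
    rw [Real.zero_rpow hβ.ne'] at h2
    exact h2.mono_left nhdsWithin_le_nhds
  have := (Complex.continuous_ofReal.tendsto 0).comp h
  exact this

lemma G_eq (a c L M : ℂ) (hc : c ≠ 0) (hL : L ≠ 0) (hM : M ≠ 0) (hQ : M - L - 2*a ≠ 0) :
    4 * ((-a - 2*L) + (2*M - a) + 2*a) /
      ((a + (-a - 2*L)) * ((a + (2*M - a))/c) * ((-a - 2*L) + (2*M - a) - 2*a))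
    = c * ((-L * M)⁻¹ * (1 + 2*a/(M - L - 2*a))) := by
  have h1 : a + (-a - 2*L) = -2*L := by ring
  have h2 : a + (2*M - a) = 2*M := by ring
  have h3 : (-a - 2*L) + (2*M - a) - 2*a = 2*(M - L - 2*a) := by ring
  rw [h1, h2, h3]
  field_simp
  have hQ' : -(a*2) - L + M ≠ 0 := by contrapose! hQ; linear_combination hQ
  linear_combination (-8 : ℂ) * mul_inv_cancel₀ hQ'

lemma D_eq (a c L M : ℂ) (hc : c ≠ 0) (hL : L ≠ 0) (hQ : M - L - 2*a ≠ 0)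
    (hd : (-a - 2*L)^2 - (2*M - a)^2 = 4) :
    ((2*M - a)/c * ((-a - 2*L) + (2*M - a)) - a/c * ((-a - 2*L) - (2*M - a) + 2*a)) /
      ((a + (-a - 2*L)) * ((-a - 2*L) + (2*M - a) - 2*a))
    = (1 - (-L * (M - L - 2*a))⁻¹) / c := by
  have h1 : a + (-a - 2*L) = -2*L := by ring
  have h3 : (-a - 2*L) + (2*M - a) - 2*a = 2*(M - L - 2*a) := by ring
  rw [h1, h3]
  field_simp
  linear_combination hd

set_option maxHeartbeats 1000000 in
/-- Ballistic limit of the one-dimensional rescaled kinetic model (`γ > 1/2`, `μ = 0`).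
For `v ∈ {−1, 1}`, let `λ_ε(v)` (resp. `ν_ε(v)`) be the unique root with negative
(resp. positive) real part of `z² + ε^γ z − (ε^{1+μ}s + iεξv + 1) = 0`
(resp. `z² − ε^γ z − (ε^{1+μ}s + iεξv) = 0`).  With
`N(ε) = (1/2)Σ_v (1/(−λν))(1 + 2ε^γ/(ν − λ − 2ε^γ))` and
`D(ε) = 1 − (1/2)Σ_v 1/(−λ(ν − λ − 2ε^γ))`, one has `D(ε) ≠ 0` for small `ε > 0`
and `ε N(ε)/D(ε) → 1/√(s² + ξ²)` as `ε → 0⁺`. -/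
theorem stmt16 (s ξ γ μ : ℝ) (hs : 0 < s) (hγ : 1 / 2 < γ) (hμ : μ = 0)
    (lam nu : ℝ → ℝ → ℂ)
    (hroot : ∀ ε : ℝ, 0 < ε → ∀ v : ℝ, v = 1 ∨ v = -1 →
      (lam ε v ^ 2 + ((ε ^ γ : ℝ) : ℂ) * lam ε v
          - (((ε ^ (1 + μ) : ℝ) : ℂ) * (s : ℂ) + Complex.I * (ε : ℂ) * ((ξ * v : ℝ) : ℂ) + 1) = 0 ∧
        (lam ε v).re < 0) ∧
      (nu ε v ^ 2 - ((ε ^ γ : ℝ) : ℂ) * nu ε v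
          - (((ε ^ (1 + μ) : ℝ) : ℂ) * (s : ℂ) + Complex.I * (ε : ℂ) * ((ξ * v : ℝ) : ℂ)) = 0 ∧
        0 < (nu ε v).re)) :
    let N : ℝ → ℂ := fun ε => (1 / 2) *
      ((-lam ε 1 * nu ε 1)⁻¹ *
          (1 + 2 * ((ε ^ γ : ℝ) : ℂ) / (nu ε 1 - lam ε 1 - 2 * ((ε ^ γ : ℝ) : ℂ))) +
        (-lam ε (-1) * nu ε (-1))⁻¹ *
          (1 + 2 * ((ε ^ γ : ℝ) : ℂ) / (nu ε (-1) - lam ε (-1) - 2 * ((ε ^ γ : ℝ) : ℂ))))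
    let D : ℝ → ℂ := fun ε => 1 - (1 / 2) *
      ((-lam ε 1 * (nu ε 1 - lam ε 1 - 2 * ((ε ^ γ : ℝ) : ℂ)))⁻¹ +
        (-lam ε (-1) * (nu ε (-1) - lam ε (-1) - 2 * ((ε ^ γ : ℝ) : ℂ)))⁻¹)
    (∀ᶠ ε in nhdsWithin 0 (Set.Ioi 0), D ε ≠ 0) ∧
      Tendsto (fun ε : ℝ => (ε : ℂ) * N ε / D ε) (nhdsWithin 0 (Set.Ioi 0))
        (nhds (((1 / Real.sqrt (s ^ 2 + ξ ^ 2) : ℝ)) : ℂ)) := by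
  subst hμ
  intro N D
  have hN : ∀ ε : ℝ, N ε = (1 / 2) *
      ((-lam ε 1 * nu ε 1)⁻¹ *
          (1 + 2 * ((ε ^ γ : ℝ) : ℂ) / (nu ε 1 - lam ε 1 - 2 * ((ε ^ γ : ℝ) : ℂ))) +
        (-lam ε (-1) * nu ε (-1))⁻¹ *
          (1 + 2 * ((ε ^ γ : ℝ) : ℂ) / (nu ε (-1) - lam ε (-1) - 2 * ((ε ^ γ : ℝ) : ℂ)))) :=
    fun _ => rfl
  have hD : ∀ ε : ℝ, D ε = 1 - (1 / 2) *
      ((-lam ε 1 * (nu ε 1 - lam ε 1 - 2 * ((ε ^ γ : ℝ) : ℂ)))⁻¹ +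
        (-lam ε (-1) * (nu ε (-1) - lam ε (-1) - 2 * ((ε ^ γ : ℝ) : ℂ)))⁻¹) :=
    fun _ => rfl
  clear_value N D
  set l : Filter ℝ := nhdsWithin 0 (Set.Ioi 0) with hldef
  have hev : ∀ᶠ ε in l, 0 < ε := self_mem_nhdsWithin
  -- notation
  set a : ℝ → ℂ := fun ε => ((ε ^ γ : ℝ) : ℂ) with hadef
  set c : ℝ → ℂ := fun ε => ((Real.sqrt ε : ℝ) : ℂ) with hcdef
  have haeq : ∀ ε : ℝ, a ε = ((ε ^ γ : ℝ) : ℂ) := fun _ => rfl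
  -- cleaned root equations
  have hroot1 : ∀ ε : ℝ, 0 < ε → ∀ v : ℝ, v = 1 ∨ v = -1 →
      lam ε v ^ 2 + a ε * lam ε v - ((ε : ℂ) * s + Complex.I * ε * ξ * v + 1) = 0 := by
    intro ε hε v hv
    have h := ((hroot ε hε v hv).1).1
    rw [show (1 : ℝ) + 0 = 1 by norm_num, Real.rpow_one] at h
    rw [haeq]
    push_cast at h ⊢
    linear_combination h
  have hroot2 : ∀ ε : ℝ, 0 < ε → ∀ v : ℝ, v = 1 ∨ v = -1 →
      nu ε v ^ 2 - a ε * nu ε v - ((ε : ℂ) * s + Complex.I * ε * ξ * v) = 0 := by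
    intro ε hε v hv
    have h := ((hroot ε hε v hv).2).1
    rw [show (1 : ℝ) + 0 = 1 by norm_num, Real.rpow_one] at h
    rw [haeq]
    push_cast at h ⊢
    linear_combination h
  -- the A, B quantities
  set A : ℝ → ℝ → ℂ := fun ε v => -a ε - 2 * lam ε v with hAdef
  set B : ℝ → ℝ → ℂ := fun ε v => 2 * nu ε v - a ε with hBdef
  have hAeq : ∀ (ε v : ℝ), A ε v = -a ε - 2 * lam ε v := fun _ _ => rfl
  have hBeq : ∀ (ε v : ℝ), B ε v = 2 * nu ε v - a ε := fun _ _ => rfl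
  have hA2 : ∀ ε : ℝ, 0 < ε → ∀ v : ℝ, v = 1 ∨ v = -1 →
      A ε v ^ 2 = a ε ^ 2 + 4 + 4 * ((ε : ℂ) * s + Complex.I * ε * ξ * v) := by
    intro ε hε v hv
    rw [hAeq]
    linear_combination 4 * hroot1 ε hε v hv
  have hB2 : ∀ ε : ℝ, 0 < ε → ∀ v : ℝ, v = 1 ∨ v = -1 →
      B ε v ^ 2 = a ε ^ 2 + 4 * ((ε : ℂ) * s + Complex.I * ε * ξ * v) := by
    intro ε hε v hv
    rw [hBeq]
    linear_combination 4 * hroot2 ε hε v hv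
  -- positivity of real parts of A and B
  have hReA : ∀ ε : ℝ, 0 < ε → ∀ v : ℝ, v = 1 ∨ v = -1 → 0 < (A ε v).re := by
    intro ε hε v hv
    have ht : 0 < ε ^ γ := Real.rpow_pos_of_pos hε γ
    have hL : (lam ε v).re < 0 := ((hroot ε hε v hv).1).2
    have hre : (A ε v).re = -(ε ^ γ) - 2 * (lam ε v).re := by
      rw [hAeq, haeq]
      simp
    have h2 : (A ε v).re ^ 2 - (A ε v).im ^ 2 = (ε ^ γ) ^ 2 + 4 + 4 * (ε * s) := by
      have h := congrArg Complex.re (hA2 ε hε v hv)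
      rw [haeq] at h
      simp [pow_two, Complex.mul_re, Complex.mul_im] at h
      nlinarith [h]
    by_contra hcon
    push_neg at hcon
    nlinarith [sq_nonneg (A ε v).im, mul_pos hε hs,
      mul_pos (show (0:ℝ) < ε ^ γ + (A ε v).re by rw [hre]; linarith)
        (show (0:ℝ) < ε ^ γ - (A ε v).re by linarith)]
  have hReB : ∀ ε : ℝ, 0 < ε → ∀ v : ℝ, v = 1 ∨ v = -1 → 0 < (B ε v).re := by
    intro ε hε v hv
    have ht : 0 < ε ^ γ := Real.rpow_pos_of_pos hε γ
    have hM : 0 < (nu ε v).re := ((hroot ε hε v hv).2).2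
    have hre : (B ε v).re = 2 * (nu ε v).re - ε ^ γ := by
      rw [hBeq, haeq]
      simp
    have h2 : (B ε v).re ^ 2 - (B ε v).im ^ 2 = (ε ^ γ) ^ 2 + 4 * (ε * s) := by
      have h := congrArg Complex.re (hB2 ε hε v hv)
      rw [haeq] at h
      simp [pow_two, Complex.mul_re, Complex.mul_im] at h
      nlinarith [h]
    by_contra hcon
    push_neg at hcon
    nlinarith [sq_nonneg (B ε v).im, mul_pos hε hs,
      mul_pos (show (0:ℝ) < ε ^ γ + (B ε v).re by rw [hre]; linarith)
        (show (0:ℝ) < ε ^ γ - (B ε v).re by linarith)]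
  clear_value a c A B
  -- constants
  set r : ℝ := Real.sqrt (s ^ 2 + ξ ^ 2) with hrdef
  have hr2 : r ^ 2 = s ^ 2 + ξ ^ 2 := Real.sq_sqrt (by positivity)
  have hrpos : 0 < r := Real.sqrt_pos.mpr (by positivity)
  clear_value r
  set x : ℝ := Real.sqrt ((r + s) / 2) with hxdef
  have hx2 : x ^ 2 = (r + s) / 2 := Real.sq_sqrt (by positivity)
  have hxpos : 0 < x := Real.sqrt_pos.mpr (by positivity)
  clear_value x
  have hxne : x ≠ 0 := hxpos.ne'
  have hxC : ((x : ℝ) : ℂ) ≠ 0 := by exact_mod_cast hxpos.ne'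
  have hrC : ((r : ℝ) : ℂ) ≠ 0 := by exact_mod_cast hrpos.ne'
  set q : ℝ → ℂ := fun v => (x : ℂ) + Complex.I * ((ξ * v / (2 * x) : ℝ) : ℂ) with hqdef
  have hqeq : ∀ v : ℝ, q v = (x : ℂ) + Complex.I * ((ξ * v / (2 * x) : ℝ) : ℂ) := fun _ => rfl
  clear_value q
  have hqre : ∀ v : ℝ, (q v).re = x := by
    intro v
    rw [hqeq]
    simp only [Complex.add_re, Complex.mul_re, Complex.I_re, Complex.I_im, Complex.ofReal_re,
      Complex.ofReal_im]
    ring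
  have hqsq : ∀ v : ℝ, v = 1 ∨ v = -1 → q v ^ 2 = (s : ℂ) + Complex.I * ξ * v := by
    intro v hv
    have hv2 : v ^ 2 = 1 := by rcases hv with h | h <;> simp [h]
    have hre0 : x ^ 2 - (ξ * v / (2 * x)) ^ 2 = s := by
      field_simp
      linear_combination (4*x^2 + 2*r - 2*s) * hx2 + hr2 + (-ξ^2) * hv2
    have him0 : x * (ξ * v / (2 * x)) + x * (ξ * v / (2 * x)) = ξ * v := by
      field_simp; ring
    rw [hqeq, Complex.ext_iff]
    constructor
    · simp only [pow_two, Complex.mul_re, Complex.mul_im, Complex.add_re, Complex.add_im,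
        Complex.I_re, Complex.I_im, Complex.ofReal_re, Complex.ofReal_im]
      linear_combination hre0
    · simp only [pow_two, Complex.mul_re, Complex.mul_im, Complex.add_re, Complex.add_im,
        Complex.I_re, Complex.I_im, Complex.ofReal_re, Complex.ofReal_im]
      linear_combination him0
  have hqne : ∀ v : ℝ, q v ≠ 0 := by
    intro v h
    have h2 := hqre v
    rw [h] at h2
    simp only [Complex.zero_re] at h2
    exact hxpos.ne h2
  have hsum : q 1 + q (-1) = 2 * (x : ℂ) := by
    rw [hqeq, hqeq]
    push_cast
    ring
  have hprod : q 1 * q (-1) = (r : ℂ) := by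
    have hpr : x ^ 2 + (ξ * 1 / (2 * x)) * (ξ * 1 / (2 * x)) = r := by
      field_simp
      linear_combination (4*x^2 - 2*r + 2*s) * hx2 - hr2
    rw [hqeq, hqeq, Complex.ext_iff]
    constructor
    · simp only [Complex.mul_re, Complex.mul_im, Complex.add_re, Complex.add_im,
        Complex.I_re, Complex.I_im, Complex.ofReal_re, Complex.ofReal_im]
      linear_combination hpr
    · simp only [Complex.mul_re, Complex.mul_im, Complex.add_re, Complex.add_im,
        Complex.I_re, Complex.I_im, Complex.ofReal_re, Complex.ofReal_im]
      ring_nf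
  -- basic limits
  have hγ0 : 0 < γ := by linarith
  have hlim_a : Tendsto a l (nhds 0) := by
    rw [hadef]
    exact rpow_tendsto_zero hγ0
  have hlim_c : Tendsto c l (nhds 0) := by
    rw [hcdef]
    have hcont : Continuous fun ε : ℝ => ((Real.sqrt ε : ℝ) : ℂ) :=
      Complex.continuous_ofReal.comp Real.continuous_sqrt
    have h0 : Tendsto (fun ε : ℝ => ((Real.sqrt ε : ℝ) : ℂ)) (nhds 0) (nhds 0) := by
      simpa using hcont.tendsto 0
    exact h0.mono_left nhdsWithin_le_nhds
  have hceq : ∀ ε : ℝ, c ε = ((Real.sqrt ε : ℝ) : ℂ) := fun ε => by rw [hcdef]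
  have hc_ne : ∀ ε : ℝ, 0 < ε → c ε ≠ 0 := by
    intro ε hε
    rw [hceq]
    simp only [ne_eq, Complex.ofReal_eq_zero]
    exact (Real.sqrt_pos.mpr hε).ne'
  have hc_sq : ∀ ε : ℝ, 0 < ε → c ε ^ 2 = (ε : ℂ) := by
    intro ε hε
    rw [hceq, ← Complex.ofReal_pow, Real.sq_sqrt hε.le]
  have hlim_at : Tendsto (fun ε => a ε / c ε) l (nhds 0) := by
    refine Tendsto.congr' ?_ (rpow_tendsto_zero (show (0:ℝ) < γ - 1/2 by linarith))
    filter_upwards [hev] with ε hε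
    rw [haeq, hceq, Real.sqrt_eq_rpow, ← Complex.ofReal_div, ← Real.rpow_sub hε]
  have hlim_w : ∀ v : ℝ, Tendsto (fun ε : ℝ => (ε : ℂ) * s + Complex.I * ε * ξ * v) l (nhds 0) := by
    intro v
    have hcont : Continuous fun ε : ℝ => (ε : ℂ) * s + Complex.I * ε * ξ * v :=
      (Complex.continuous_ofReal.mul continuous_const).add
        (((continuous_const.mul Complex.continuous_ofReal).mul continuous_const).mul
          continuous_const)
    have h0 : Tendsto (fun ε : ℝ => (ε : ℂ) * s + Complex.I * ε * ξ * v) (nhds 0) (nhds 0) := by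
      simpa using hcont.tendsto 0
    exact h0.mono_left nhdsWithin_le_nhds
  have hlim_A : ∀ v : ℝ, v = 1 ∨ v = -1 → Tendsto (fun ε => A ε v) l (nhds 2) := by
    intro v hv
    refine sqrt_tendsto_aux (by norm_num) ?_ ?_
    · filter_upwards [hev] with ε hε using (hReA ε hε v hv).le
    · have t1 : Tendsto (fun ε => a ε ^ 2 + 4 + 4 * ((ε : ℂ) * s + Complex.I * ε * ξ * v)) l
          (nhds ((0:ℂ) ^ 2 + 4 + 4 * 0)) :=
        ((hlim_a.pow 2).add_const 4).add ((hlim_w v).const_mul 4)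
      rw [show ((2:ℂ) ^ 2 = (0:ℂ) ^ 2 + 4 + 4 * 0) by norm_num]
      refine Tendsto.congr' ?_ t1
      filter_upwards [hev] with ε hε using (hA2 ε hε v hv).symm
  have hlim_Bc : ∀ v : ℝ, v = 1 ∨ v = -1 →
      Tendsto (fun ε => B ε v / c ε) l (nhds (2 * q v)) := by
    intro v hv
    refine sqrt_tendsto_aux ?_ ?_ ?_
    · have h2 : (2 * q v).re = 2 * x := by
        rw [Complex.mul_re]
        simp [hqre v]
      rw [h2]; positivity
    · filter_upwards [hev] with ε hε
      have h1 : B ε v / c ε = (((Real.sqrt ε)⁻¹ : ℝ) : ℂ) * B ε v := by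
        rw [hceq]
        push_cast
        rw [div_eq_inv_mul]
      rw [h1, Complex.re_ofReal_mul]
      have h3 := (hReB ε hε v hv).le
      positivity
    · have t1 : Tendsto (fun ε => (a ε / c ε) ^ 2 + 4 * ((s:ℂ) + Complex.I * ξ * v)) l
          (nhds ((0:ℂ) ^ 2 + 4 * ((s:ℂ) + Complex.I * ξ * v))) :=
        (hlim_at.pow 2).add_const _
      rw [show ((2 * q v) ^ 2 = (0:ℂ) ^ 2 + 4 * ((s:ℂ) + Complex.I * ξ * v)) by
        rw [mul_pow, hqsq v hv]; ring]
      refine Tendsto.congr' ?_ t1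
      filter_upwards [hev] with ε hε
      have hεC : (ε : ℂ) ≠ 0 := by exact_mod_cast hε.ne'
      rw [div_pow, div_pow, hB2 ε hε v hv, hc_sq ε hε]
      field_simp
  have hlim_B : ∀ v : ℝ, v = 1 ∨ v = -1 → Tendsto (fun ε => B ε v) l (nhds 0) := by
    intro v hv
    have h := (hlim_Bc v hv).mul hlim_c
    rw [mul_zero] at h
    refine Tendsto.congr' ?_ h
    filter_upwards [hev] with ε hε
    rw [div_mul_cancel₀ _ (hc_ne ε hε)]
  -- eventual non-vanishing
  have hlim_aB : ∀ v : ℝ, v = 1 ∨ v = -1 →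
      Tendsto (fun ε => (a ε + B ε v) / c ε) l (nhds (2 * q v)) := by
    intro v hv
    have h := hlim_at.add (hlim_Bc v hv)
    rw [zero_add] at h
    exact Tendsto.congr (fun ε => (add_div _ _ (c ε)).symm) h
  have hne : ∀ v : ℝ, v = 1 ∨ v = -1 → ∀ᶠ ε in l,
      lam ε v ≠ 0 ∧ nu ε v ≠ 0 ∧ nu ε v - lam ε v - 2 * a ε ≠ 0 := by
    intro v hv
    have h1 : ∀ᶠ ε in l, a ε + A ε v ≠ 0 :=
      (hlim_a.add (hlim_A v hv)).eventually_ne (by norm_num)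
    have h2 : ∀ᶠ ε in l, (a ε + B ε v) / c ε ≠ 0 :=
      (hlim_aB v hv).eventually_ne (mul_ne_zero two_ne_zero (hqne v))
    have h3 : ∀ᶠ ε in l, A ε v + B ε v - 2 * a ε ≠ 0 :=
      (((hlim_A v hv).add (hlim_B v hv)).sub (hlim_a.const_mul 2)).eventually_ne (by norm_num)
    filter_upwards [h1, h2, h3] with ε k1 k2 k3
    refine ⟨?_, ?_, ?_⟩
    · intro h0
      apply k1
      rw [hAeq, h0]
      ring
    · intro h0
      apply k2
      have hz : a ε + B ε v = 0 := by rw [hBeq, h0]; ring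
      rw [hz, zero_div]
    · intro h0
      apply k3
      rw [hAeq, hBeq]
      linear_combination 2 * h0
  -- limits of the rescaled summands
  have hT : ∀ v : ℝ, v = 1 ∨ v = -1 → Tendsto (fun ε => 4 * (A ε v + B ε v + 2 * a ε) /
      ((a ε + A ε v) * ((a ε + B ε v) / c ε) * (A ε v + B ε v - 2 * a ε))) l
      (nhds ((q v)⁻¹)) := by
    intro v hv
    have hnum : Tendsto (fun ε => 4 * (A ε v + B ε v + 2 * a ε)) l (nhds 8) := by
      have h := (((hlim_A v hv).add (hlim_B v hv)).add (hlim_a.const_mul 2)).const_mul (4:ℂ)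
      convert h using 2
      norm_num
    have hden : Tendsto (fun ε =>
        (a ε + A ε v) * ((a ε + B ε v) / c ε) * (A ε v + B ε v - 2 * a ε)) l
        (nhds (8 * q v)) := by
      have h := ((hlim_a.add (hlim_A v hv)).mul (hlim_aB v hv)).mul
        (((hlim_A v hv).add (hlim_B v hv)).sub (hlim_a.const_mul 2))
      convert h using 2
      norm_num
      ring
    have h8 : (8:ℂ) * q v ≠ 0 := mul_ne_zero (by norm_num) (hqne v)
    have h := hnum.div hden h8
    convert h using 2
    · rfl
    rw [eq_div_iff h8, inv_mul_eq_div, mul_div_assoc, div_self (hqne v), mul_one]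
  have hU : ∀ v : ℝ, v = 1 ∨ v = -1 → Tendsto (fun ε =>
      (B ε v / c ε * (A ε v + B ε v) - a ε / c ε * (A ε v - B ε v + 2 * a ε)) /
        ((a ε + A ε v) * (A ε v + B ε v - 2 * a ε))) l (nhds (q v)) := by
    intro v hv
    have hnum : Tendsto (fun ε =>
        B ε v / c ε * (A ε v + B ε v) - a ε / c ε * (A ε v - B ε v + 2 * a ε)) l
        (nhds (4 * q v)) := by
      have h := ((hlim_Bc v hv).mul ((hlim_A v hv).add (hlim_B v hv))).sub
        (hlim_at.mul (((hlim_A v hv).sub (hlim_B v hv)).add (hlim_a.const_mul 2)))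
      convert h using 2
      norm_num
      ring
    have hden : Tendsto (fun ε => (a ε + A ε v) * (A ε v + B ε v - 2 * a ε)) l
        (nhds 4) := by
      have h := (hlim_a.add (hlim_A v hv)).mul
        (((hlim_A v hv).add (hlim_B v hv)).sub (hlim_a.const_mul 2))
      convert h using 2
      norm_num
    have h := hnum.div hden (by norm_num : (4:ℂ) ≠ 0)
    convert h using 2
    · rfl
    rw [eq_div_iff (by norm_num : (4:ℂ) ≠ 0)]
    ring
  -- convergence of the rescaled numerator
  have hG : Tendsto (fun ε => c ε * N ε) l (nhds ((1/2 : ℂ) * ((q 1)⁻¹ + (q (-1))⁻¹))) := by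
    have h := ((hT 1 (Or.inl rfl)).add (hT (-1) (Or.inr rfl))).const_mul (1/2 : ℂ)
    refine Tendsto.congr' ?_ h
    filter_upwards [hev, hne 1 (Or.inl rfl), hne (-1) (Or.inr rfl)] with ε hε k1 k2
    obtain ⟨hl1, hn1, hq1⟩ := k1
    obtain ⟨hl2, hn2, hq2⟩ := k2
    have hc0 := hc_ne ε hε
    have e1 := G_eq (a ε) (c ε) (lam ε 1) (nu ε 1) hc0 hl1 hn1 hq1
    have e2 := G_eq (a ε) (c ε) (lam ε (-1)) (nu ε (-1)) hc0 hl2 hn2 hq2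
    rw [hN ε, ← haeq ε]
    simp only [hAeq, hBeq]
    linear_combination (1/2 : ℂ) * e1 + (1/2 : ℂ) * e2
  -- convergence of the rescaled denominator
  have hH : Tendsto (fun ε => D ε / c ε) l (nhds ((x : ℝ) : ℂ)) := by
    have h := ((hU 1 (Or.inl rfl)).add (hU (-1) (Or.inr rfl))).const_mul (1/2 : ℂ)
    rw [show (1/2 : ℂ) * (q 1 + q (-1)) = ((x:ℝ):ℂ) by rw [hsum]; ring] at h
    refine Tendsto.congr' ?_ h
    filter_upwards [hev, hne 1 (Or.inl rfl), hne (-1) (Or.inr rfl)] with ε hε k1 k2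
    obtain ⟨hl1, hn1, hq1⟩ := k1
    obtain ⟨hl2, hn2, hq2⟩ := k2
    have hc0 := hc_ne ε hε
    have hd1 : (-a ε - 2 * lam ε 1)^2 - (2 * nu ε 1 - a ε)^2 = 4 := by
      have u1 := hA2 ε hε 1 (Or.inl rfl)
      have u2 := hB2 ε hε 1 (Or.inl rfl)
      rw [hAeq] at u1
      rw [hBeq] at u2
      linear_combination u1 - u2
    have hd2 : (-a ε - 2 * lam ε (-1))^2 - (2 * nu ε (-1) - a ε)^2 = 4 := by
      have u1 := hA2 ε hε (-1) (Or.inr rfl)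
      have u2 := hB2 ε hε (-1) (Or.inr rfl)
      rw [hAeq] at u1
      rw [hBeq] at u2
      linear_combination u1 - u2
    have e1 := D_eq (a ε) (c ε) (lam ε 1) (nu ε 1) hc0 hl1 hq1 hd1
    have e2 := D_eq (a ε) (c ε) (lam ε (-1)) (nu ε (-1)) hc0 hl2 hq2 hd2
    rw [hD ε, ← haeq ε]
    simp only [hAeq, hBeq]
    linear_combination (1/2 : ℂ) * e1 + (1/2 : ℂ) * e2
  -- conclusion
  have hDne : ∀ᶠ ε in l, D ε ≠ 0 := by
    filter_upwards [hH.eventually_ne hxC] with ε h hD0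
    exact h (by rw [hD0, zero_div])
  refine ⟨hDne, ?_⟩
  have hfin := hG.div hH hxC
  have hval : ((1/2 : ℂ) * ((q 1)⁻¹ + (q (-1))⁻¹)) / ((x:ℝ):ℂ) = ((1/r : ℝ) : ℂ) := by
    push_cast
    field_simp [hqne 1, hqne (-1)]
    linear_combination ((r:ℝ):ℂ) * hsum - 2 * ((x:ℝ):ℂ) * hprod
  rw [hval] at hfin
  refine Tendsto.congr' ?_ hfin
  filter_upwards [hev] with ε hε
  simp only [Pi.div_apply]
  rw [div_div_eq_mul_div, show c ε * N ε * c ε = (ε : ℂ) * N ε by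
    rw [← hc_sq ε hε]; ring]
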